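/- Deletion-to-edit-distance conversion for Text-CRS: if x' is obtained from an n-token sequence x by deleting l ≤ r tokens (with remaining tokens shifted forward and padding appended at the end), then the word-position displacement of the induced permutation is at most max_{l' ∈ {0,…,r}} 2l'(n−l'), which equals 2r(n−r) if n ≥ 2r and is at most n²/2 if n < 2r. -/

import Mathlib

/-- Sum of `min · c` over a finset of naturals dominates the same sum over `range card`. -/
lemma sum_min_ge_aux (s : Finset ℕ) (c : ℕ) :
    ∑ k ∈ Finset.range s.card, min k c ≤ ∑ x ∈ s, min x c := by
  induction s using Finset.induction_on_max with
  | empty => simp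
  | insert a s ha ih =>
    have hna : a ∉ s := fun h => lt_irrefl a (ha a h)
    have hcard : s.card ≤ a := by
      have hsub : s ⊆ Finset.range a := fun x hx => Finset.mem_range.mpr (ha x hx)
      simpa using Finset.card_le_card hsub
    rw [Finset.card_insert_of_notMem hna, Finset.sum_insert hna,
      Finset.sum_range_succ]
    have hmin : min s.card c ≤ min a c := by omega
    omega


/-- Numeric bound: `4 * (sum up to (n - n/2)) + (sum up to n/2) ≤ n²`. -/
lemma num_bound_aux (n m X Y : ℕ) (hm : n / 2 = m)
    (hgX : X * 2 = (n - m) * (n - m - 1)) (hgY : Y * 2 = (m + 1) * m) :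
    4 * (X + Y) ≤ n * n := by
  have hcase : n = 2 * m ∨ n = 2 * m + 1 := by omega
  rcases hcase with hcase | hcase
  · have e1 : n - m = m := by omega
    rw [e1] at hgX
    rcases Nat.eq_zero_or_pos m with hm0 | hm0
    · subst hm0
      simp at hgX hgY
      omega
    obtain ⟨k, rfl⟩ : ∃ k, m = k + 1 := ⟨m - 1, by omega⟩
    have e2 : k + 1 - 1 = k := by omega
    rw [e2] at hgX
    subst hcase
    calc 4 * (X + Y) = 2 * (X * 2) + 2 * (Y * 2) := by ring
      _ = 2 * ((k + 1) * k) + 2 * ((k + 1 + 1) * (k + 1)) := by rw [hgX, hgY]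
      _ ≤ (2 * (k + 1)) * (2 * (k + 1)) := le_of_eq (by ring)
  · have e1 : n - m = m + 1 := by omega
    have e2 : m + 1 - 1 = m := by omega
    rw [e1, e2] at hgX
    subst hcase
    calc 4 * (X + Y) = 2 * (X * 2) + 2 * (Y * 2) := by ring
      _ = 2 * ((m + 1) * m) + 2 * ((m + 1) * m) := by rw [hgX, hgY]
      _ ≤ (2 * m + 1) * (2 * m + 1) := by nlinarith

/-- Deletion-to-edit-distance conversion for Text-CRS.  Deleting `l ≤ r` tokens from an
`n`-token sequence induces a permutation `σ` which shifts each surviving token `i` forward by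
the number of deleted tokens before it and sends deleted tokens to the trailing `l` positions.
The total word-position displacement `Σ_i |i − σ(i)|` is at most
`max_{l' ≤ r} 2l'(n−l')`, which equals `2r(n−r)` if `n ≥ 2r` and is at most `n²/2` otherwise. -/
theorem stmt_15 (n l r : ℕ) (hl : l ≤ r) (σ : Equiv.Perm (Fin n))
    (D : Finset (Fin n)) (hD : D.card = l)
    (hsurv : ∀ i : Fin n, i ∉ D →
      ((σ i : ℕ)) = (i : ℕ) - (D.filter (fun j : Fin n => (j : ℕ) < (i : ℕ))).card)
    (hdel : ∀ i ∈ D, n - l ≤ (σ i : ℕ)) :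
    ((∑ i : Fin n, ((i : ℤ) - ((σ i : ℕ) : ℤ)).natAbs : ℕ) : ℝ)
      ≤ if 2 * r ≤ n then ((2 * r * (n - r) : ℕ) : ℝ) else (n : ℝ) ^ 2 / 2 := by
  obtain ⟨S, hS⟩ : ∃ S, (∑ i : Fin n, ((i : ℤ) - ((σ i : ℕ) : ℤ)).natAbs) = S := ⟨_, rfl⟩
  rw [hS]
  -- split each |i - σ i| into the two truncated subtractions
  have hsplit : S = (∑ i : Fin n, ((i : ℕ) - (σ i : ℕ)))
      + ∑ i : Fin n, ((σ i : ℕ) - (i : ℕ)) := by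
    rw [← hS, ← Finset.sum_add_distrib]
    exact Finset.sum_congr rfl fun i _ => by omega
  -- the two halves are equal since σ is a permutation
  have hbal : (∑ i : Fin n, ((i : ℕ) - (σ i : ℕ)))
      = ∑ i : Fin n, ((σ i : ℕ) - (i : ℕ)) := by
    have h1 : ∑ i : Fin n, ((σ i : ℕ) : ℤ) = ∑ i : Fin n, ((i : ℕ) : ℤ) :=
      Equiv.sum_comp σ (fun i : Fin n => ((i : ℕ) : ℤ))
    have h3 : (∑ i : Fin n, (((i : ℕ) - (σ i : ℕ) : ℕ) : ℤ))
        = (∑ i : Fin n, (((σ i : ℕ) - (i : ℕ) : ℕ) : ℤ))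
          + (∑ i : Fin n, ((i : ℕ) : ℤ)) - ∑ i : Fin n, ((σ i : ℕ) : ℤ) := by
      rw [← Finset.sum_add_distrib, ← Finset.sum_sub_distrib]
      exact Finset.sum_congr rfl fun i _ => by omega
    rw [h1] at h3
    simp only [add_sub_cancel_right] at h3
    exact_mod_cast h3
  -- survivors do not move forward
  have hsum2 : (∑ i : Fin n, ((σ i : ℕ) - (i : ℕ)))
      = ∑ i ∈ D, ((σ i : ℕ) - (i : ℕ)) := by
    symm
    apply Finset.sum_subset (Finset.subset_univ D)
    intro i _ hiD
    have := hsurv i hiD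
    omega
  have hSS : S = 2 * ∑ i ∈ D, ((σ i : ℕ) - (i : ℕ)) := by
    rw [hsplit, hbal, hsum2]; ring
  by_cases h2r : 2 * r ≤ n
  · -- main branch: bound by 2 l (n - l) ≤ 2 r (n - r)
    rw [if_pos h2r]
    have hln : 2 * l ≤ n := by omega
    obtain ⟨c, hc⟩ : ∃ c, n - l = c := ⟨_, rfl⟩
    -- (A) the forward displacements into the tail are distinct values < l
    have hinj : ∀ x ∈ D, ∀ y ∈ D,
        (σ x : ℕ) - c = (σ y : ℕ) - c → x = y := by
      intro x hx y hy hxy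
      have h1 := hdel x hx
      have h2 := hdel y hy
      have h3 : (σ x : ℕ) = (σ y : ℕ) := by omega
      exact σ.injective (Fin.ext h3)
    have hA : (∑ i ∈ D, ((σ i : ℕ) - c)) ≤ ∑ k ∈ Finset.range l, k := by
      have him : D.image (fun i : Fin n => (σ i : ℕ) - c) ⊆ Finset.range l := by
        intro k hk
        simp only [Finset.mem_image] at hk
        obtain ⟨i, hi, rfl⟩ := hk
        have h1 := hdel i hi
        have h2 : (σ i : ℕ) < n := (σ i).isLt
        simp only [Finset.mem_range]
        omega
      calc (∑ i ∈ D, ((σ i : ℕ) - c))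
          = ∑ k ∈ D.image (fun i : Fin n => (σ i : ℕ) - c), k := by
            rw [Finset.sum_image hinj]
        _ ≤ ∑ k ∈ Finset.range l, k := Finset.sum_le_sum_of_subset him
    -- (B) total of (c - i) over D
    have hBmin : (∑ i ∈ D, (c - (i : ℕ))) + ∑ i ∈ D, min (i : ℕ) c = l * c := by
      calc (∑ i ∈ D, (c - (i : ℕ))) + ∑ i ∈ D, min (i : ℕ) c
          = ∑ i ∈ D, ((c - (i : ℕ)) + min (i : ℕ) c) := Finset.sum_add_distrib.symm
        _ = ∑ _i ∈ D, c :=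
            Finset.sum_congr rfl fun i _ => by omega
        _ = l * c := by rw [Finset.sum_const, hD, smul_eq_mul]
    have hM : (∑ k ∈ Finset.range l, k) ≤ ∑ i ∈ D, min (i : ℕ) c := by
      have hval : ∑ i ∈ D, min (i : ℕ) c = ∑ x ∈ D.image Fin.val, min x c := by
        rw [Finset.sum_image (fun x _ y _ h => Fin.val_injective h)]
      have hcard' : (D.image Fin.val).card = l := by
        rw [Finset.card_image_of_injective _ Fin.val_injective, hD]
      have haux := sum_min_ge_aux (D.image Fin.val) c
      rw [hcard'] at haux
      rw [hval]
      refine le_trans ?_ haux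
      apply Finset.sum_le_sum
      intro k hk
      simp only [Finset.mem_range] at hk
      omega
    have hhalf : (∑ i ∈ D, ((σ i : ℕ) - (i : ℕ))) ≤ l * c := by
      have hstep : (∑ i ∈ D, ((σ i : ℕ) - (i : ℕ)))
          ≤ (∑ i ∈ D, ((σ i : ℕ) - c)) + ∑ i ∈ D, (c - (i : ℕ)) := by
        rw [← Finset.sum_add_distrib]
        apply Finset.sum_le_sum
        intro i hi
        have h1 := hdel i hi
        omega
      -- linear arithmetic with l * c as an atom
      linarith [hA, hBmin, hM, hstep, Nat.zero_le (∑ i ∈ D, min (i : ℕ) c)]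
    -- monotonicity: l(n-l) ≤ r(n-r) for l ≤ r ≤ n/2
    have hlr : l * c ≤ r * (n - r) := by
      obtain ⟨a, ha⟩ : ∃ a, n - r = a := ⟨_, rfl⟩
      have h1 : l ≤ a := by omega
      have h2 : c = (r - l) + a := by omega
      obtain ⟨b, hb⟩ : ∃ b, r - l = b := ⟨_, rfl⟩
      have h3 : r = l + b := by omega
      rw [ha, h2, hb, h3]
      nlinarith
    have hfinal : S ≤ 2 * r * (n - r) := by
      have h1 : S ≤ 2 * (l * c) := by
        rw [hSS]
        exact Nat.mul_le_mul_left 2 hhalf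
      calc S ≤ 2 * (l * c) := h1
        _ ≤ 2 * (r * (n - r)) := Nat.mul_le_mul_left 2 hlr
        _ = 2 * r * (n - r) := (mul_assoc 2 r (n - r)).symm
    exact_mod_cast hfinal
  · -- else branch: universal bound n^2/2 via triangle inequality through n/2
    rw [if_neg h2r]
    obtain ⟨m, hm⟩ : ∃ m, n / 2 = m := ⟨_, rfl⟩
    have htri : ∀ i : Fin n, ((i : ℤ) - ((σ i : ℕ) : ℤ)).natAbs
        ≤ (((i : ℕ) - m) + (m - (i : ℕ)))
          + ((((σ i : ℕ)) - m) + (m - ((σ i : ℕ)))) := by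
      intro i; omega
    have hS3 : S ≤ (∑ i : Fin n, (((i : ℕ) - m) + (m - (i : ℕ))))
        + ∑ i : Fin n, ((((σ i : ℕ)) - m) + (m - ((σ i : ℕ)))) := by
      rw [← hS, ← Finset.sum_add_distrib]
      exact Finset.sum_le_sum fun i _ => htri i
    have hperm : (∑ i : Fin n, ((((σ i : ℕ)) - m) + (m - ((σ i : ℕ)))))
        = ∑ i : Fin n, (((i : ℕ) - m) + (m - (i : ℕ))) :=
      Equiv.sum_comp σ (fun j : Fin n => (((j : ℕ) - m) + (m - (j : ℕ))))
    rw [hperm] at hS3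
    -- compute the reference sum
    have hrange : (∑ i : Fin n, (((i : ℕ) - m) + (m - (i : ℕ))))
        = ∑ k ∈ Finset.range n, ((k - m) + (m - k)) :=
      Fin.sum_univ_eq_sum_range (fun k => (k - m) + (m - k)) n
    have hXY : (∑ k ∈ Finset.range n, ((k - m) + (m - k)))
        = (∑ k ∈ Finset.range n, (k - m)) + ∑ k ∈ Finset.range n, (m - k) :=
      Finset.sum_add_distrib
    have hmn : m ≤ n := by omega
    have hX : (∑ k ∈ Finset.range n, (k - m)) = ∑ j ∈ Finset.range (n - m), j := by
      rw [Finset.range_eq_Ico, ← Finset.sum_Ico_consecutive _ (Nat.zero_le m) hmn]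
      have h1 : (∑ k ∈ Finset.Ico 0 m, (k - m)) = 0 := by
        apply Finset.sum_eq_zero
        intro k hk
        simp only [Finset.mem_Ico] at hk
        omega
      rw [h1, zero_add, Finset.sum_Ico_eq_sum_range]
      exact Finset.sum_congr rfl fun j _ => by omega
    have hY : (∑ k ∈ Finset.range n, (m - k)) = ∑ j ∈ Finset.range (m + 1), j := by
      rcases Nat.eq_zero_or_pos n with h0 | hpos
      · have hm0 : m = 0 := by omega
        rw [h0, hm0]
        simp
      have hm1 : m + 1 ≤ n := by
        have := Nat.div_lt_self hpos (by norm_num : 1 < 2)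
        omega
      rw [← Finset.sum_subset (Finset.range_subset_range.mpr hm1)
        (by intro k _ hk; simp only [Finset.mem_range, not_lt] at hk; omega)]
      calc (∑ k ∈ Finset.range (m + 1), (m - k))
          = ∑ k ∈ Finset.range (m + 1), (m + 1 - 1 - k) :=
            Finset.sum_congr rfl fun k _ => by omega
        _ = ∑ k ∈ Finset.range (m + 1), k :=
            Finset.sum_range_reflect (fun j => j) (m + 1)
    have hgX := Finset.sum_range_id_mul_two (n - m)
    have hgY := Finset.sum_range_id_mul_two (m + 1)
    -- final numeric bound : 4 * (X + Y) ≤ n * n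
    obtain ⟨X, hXdef⟩ : ∃ X, (∑ j ∈ Finset.range (n - m), j) = X := ⟨_, rfl⟩
    obtain ⟨Y, hYdef⟩ : ∃ Y, (∑ j ∈ Finset.range (m + 1), j) = Y := ⟨_, rfl⟩
    rw [hXdef] at hgX hX
    rw [hYdef] at hgY hY
    have hgY' : Y * 2 = (m + 1) * m := by
      have e : m + 1 - 1 = m := by omega
      rw [e] at hgY
      exact hgY
    have hnum : 4 * (X + Y) ≤ n * n := num_bound_aux n m X Y hm hgX hgY'
    -- assemble in ℝ
    have hSle : S ≤ 2 * (X + Y) := by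
      rw [hrange, hXY, hX, hY] at hS3
      omega
    have hcast : (S : ℝ) ≤ 2 * ((X : ℝ) + (Y : ℝ)) := by exact_mod_cast hSle
    have hcast2 : 4 * ((X : ℝ) + (Y : ℝ)) ≤ (n : ℝ) * n := by exact_mod_cast hnum
    calc (S : ℝ) ≤ 2 * ((X : ℝ) + (Y : ℝ)) := hcast
      _ ≤ (n : ℝ) ^ 2 / 2 := by rw [sq]; linarith [hcast2]
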